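/- Let $a_1,\dots,a_k > 0$ and $A_1 > A_2 > \cdots > A_k > 0$. Define $f(x) = \left(\sum_{j=1}^{k} a_j A_j^x\right)^{1/x}$ for $x \in (0,\infty)$. Then as $x \to \infty$, $f'(x) = (-A_1 \ln a_1)\frac{1}{x^2} + o\!\left(\frac{1}{x^2}\right)$; i.e., $\lim_{x\to\infty} x^2 f'(x) = -A_1 \ln a_1$. -/

import Mathlib

open Filter Real

lemma aux_x_mul_rpow {ρ : ℝ} (h0 : 0 < ρ) (h1 : ρ < 1) :
    Tendsto (fun x : ℝ => x * ρ ^ x) atTop (nhds 0) := by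
  have hb : 0 < -Real.log ρ := by
    have := Real.log_neg h0 h1; linarith
  have h := tendsto_rpow_mul_exp_neg_mul_atTop_nhds_zero 1 (-Real.log ρ) hb
  refine h.congr' ?_
  filter_upwards [eventually_gt_atTop (0:ℝ)] with x hx
  rw [Real.rpow_one, Real.rpow_def_of_pos h0]
  congr 1
  ring

theorem stmt1 (k : ℕ) (hk : 0 < k) (a A : Fin k → ℝ)
    (ha : ∀ j, 0 < a j) (hA : ∀ j, 0 < A j) (hanti : StrictAnti A)
    (f : ℝ → ℝ)
    (hf : ∀ x, f x = (∑ j, a j * A j ^ x) ^ x⁻¹) :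
    Tendsto (fun x : ℝ => x ^ 2 * deriv f x) atTop
      (nhds (-(A ⟨0, hk⟩) * Real.log (a ⟨0, hk⟩))) := by
  set j0 : Fin k := ⟨0, hk⟩ with hj0
  have hA0pos : 0 < A j0 := hA j0
  have ha0pos : 0 < a j0 := ha j0
  set N : ℝ → ℝ := fun x => ∑ j, a j * A j ^ x with hN
  set T : ℝ → ℝ := fun x => ∑ j, a j * (A j ^ x * Real.log (A j)) with hT
  have hNpos : ∀ x, 0 < N x := fun x =>
    Finset.sum_pos (fun j _ => mul_pos (ha j) (Real.rpow_pos_of_pos (hA j) x))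
      ⟨j0, Finset.mem_univ _⟩
  have hNd : ∀ x, HasDerivAt N (T x) x := by
    intro x
    apply HasDerivAt.fun_sum
    intro j _
    exact ((hasStrictDerivAt_const_rpow (hA j) x).hasDerivAt).const_mul (a j)
  -- the ratio N x / A0 ^ x tends to a j0
  set R : ℝ → ℝ := fun x => N x / A j0 ^ x with hRdef
  have hRpos : ∀ x, 0 < R x := fun x => div_pos (hNpos x) (Real.rpow_pos_of_pos hA0pos x)
  have hratio : ∀ j : Fin k, j ≠ j0 → A j / A j0 < 1 := by
    intro j hj
    have hlt : A j < A j0 := by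
      apply hanti
      exact Fin.lt_def.mpr (Nat.pos_of_ne_zero fun h => hj (Fin.ext h))
    exact (div_lt_one hA0pos).2 hlt
  have hR : Tendsto R atTop (nhds (a j0)) := by
    have hterm : ∀ j : Fin k, Tendsto (fun x : ℝ => a j * (A j / A j0) ^ x) atTop
        (nhds (if j = j0 then a j0 else 0)) := by
      intro j
      by_cases hj : j = j0
      · subst hj
        simp only [div_self hA0pos.ne', Real.one_rpow, mul_one, if_pos rfl]
        exact tendsto_const_nhds
      · have h0 : 0 < A j / A j0 := div_pos (hA j) hA0pos
        have := (tendsto_rpow_atTop_of_base_lt_one _ (by linarith) (hratio j hj)).const_mul (a j)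
        simpa [hj] using this
    have hsum := tendsto_finset_sum Finset.univ (fun j _ => hterm j)
    have hval : (∑ j, if j = j0 then a j0 else 0) = a j0 := by simp
    rw [hval] at hsum
    refine hsum.congr fun x => ?_
    rw [hRdef]
    simp only [hN, Finset.sum_div]
    refine Finset.sum_congr rfl fun j _ => ?_
    rw [Real.div_rpow (hA j).le hA0pos.le, mul_div_assoc]
  -- the numerator term tends to 0
  set D : ℝ → ℝ := fun x => x * (T x - N x * Real.log (A j0)) / A j0 ^ x with hDdef
  have hD : Tendsto D atTop (nhds 0) := by
    have hterm : ∀ j : Fin k, Tendsto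
        (fun x : ℝ => x * (A j / A j0) ^ x * (a j * (Real.log (A j) - Real.log (A j0))))
        atTop (nhds 0) := by
      intro j
      by_cases hj : j = j0
      · subst hj
        simp only [sub_self, mul_zero]
        exact tendsto_const_nhds
      · have h0 : 0 < A j / A j0 := div_pos (hA j) hA0pos
        have := (aux_x_mul_rpow h0 (hratio j hj)).mul_const
          (a j * (Real.log (A j) - Real.log (A j0)))
        simpa using this
    have hsum := tendsto_finset_sum Finset.univ (fun j _ => hterm j)
    rw [Finset.sum_const_zero] at hsum
    refine hsum.congr fun x => ?_
    rw [hDdef]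
    simp only [hN, hT]
    rw [Finset.sum_mul, ← Finset.sum_sub_distrib, Finset.mul_sum, Finset.sum_div]
    refine Finset.sum_congr rfl fun j _ => ?_
    rw [Real.div_rpow (hA j).le hA0pos.le]
    have hApow : (0:ℝ) < A j0 ^ x := Real.rpow_pos_of_pos hA0pos x
    field_simp
  -- log R
  have hlogR : ∀ x, Real.log (R x) = Real.log (N x) - x * Real.log (A j0) := by
    intro x
    rw [hRdef]
    rw [Real.log_div (hNpos x).ne' (Real.rpow_pos_of_pos hA0pos x).ne', Real.log_rpow hA0pos]
  have hlogRlim : Tendsto (fun x => Real.log (R x)) atTop (nhds (Real.log (a j0))) :=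
    (Real.continuousAt_log ha0pos.ne').tendsto.comp hR
  -- G tendsto
  set G : ℝ → ℝ := fun x => x * T x / N x - Real.log (N x) with hGdef
  have hG : Tendsto G atTop (nhds (-Real.log (a j0))) := by
    have h1 : Tendsto (fun x => D x / R x - Real.log (R x)) atTop
        (nhds (0 / a j0 - Real.log (a j0))) := (hD.div hR ha0pos.ne').sub hlogRlim
    rw [zero_div, zero_sub] at h1
    refine h1.congr' ?_
    filter_upwards [eventually_ne_atTop (0:ℝ)] with x hx
    rw [hlogR x, hGdef, hDdef, hRdef]
    have hApow : (0:ℝ) < A j0 ^ x := Real.rpow_pos_of_pos hA0pos x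
    simp only
    field_simp [(hNpos x).ne', hApow.ne']
    ring
  -- f tendsto
  have hf' : f = fun y => Real.exp (Real.log (N y) * y⁻¹) := by
    funext y
    rw [hf, Real.rpow_def_of_pos (hNpos y)]
  have hfT : Tendsto f atTop (nhds (A j0)) := by
    have hinner : Tendsto (fun x => Real.log (N x) * x⁻¹) atTop (nhds (Real.log (A j0))) := by
      have h2 : Tendsto (fun x => Real.log (R x) * x⁻¹ + Real.log (A j0)) atTop
          (nhds (Real.log (a j0) * 0 + Real.log (A j0))) :=
        (hlogRlim.mul tendsto_inv_atTop_zero).add tendsto_const_nhds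
      rw [mul_zero, zero_add] at h2
      refine h2.congr' ?_
      filter_upwards [eventually_ne_atTop (0:ℝ)] with x hx
      rw [hlogR x]
      field_simp
      ring
    have := (Real.continuous_exp.tendsto _).comp hinner
    rw [Real.exp_log hA0pos] at this
    exact this.congr fun x => by rw [hf']; rfl
  -- eventually x^2 * deriv f x = f x * G x
  have hev : (fun x : ℝ => x ^ 2 * deriv f x) =ᶠ[atTop] fun x => f x * G x := by
    filter_upwards [eventually_gt_atTop (0:ℝ)] with x hx
    have h1 : HasDerivAt (fun y => Real.log (N y)) (T x / N x) x := (hNd x).log (hNpos x).ne'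
    have h2 : HasDerivAt (fun y : ℝ => y⁻¹) (-(x ^ 2)⁻¹) x := hasDerivAt_inv hx.ne'
    have h3 := (h1.fun_mul h2).exp
    rw [← hf'] at h3
    rw [h3.deriv, hf', hGdef]
    have hNx := (hNpos x).ne'
    field_simp
    ring
  refine (Tendsto.congr' hev.symm ?_)
  have := hfT.mul hG
  rw [show A j0 * -Real.log (a j0) = -A j0 * Real.log (a j0) by ring] at this
  exact this
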